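/- arXiv:2107.13846 — 5 statements merged into one kernel-verified Lean document; each statement's English description precedes it below -/
import Mathlib

section
/- For $n \geq 2$, $c > 0$, $k > 0$, $z > 0$, the quintuple $((z+1)c, kc, c, (z+1)c, (k+1)c)$ is admissible if and only if $-nz^3 + (k^2-3n)z^2 - (3n+2k)z - (n-1) \geq 0$. -/
def Admissible (n : ℕ) (a b c d θ : ℝ) : Prop :=
  d ≥ a ∧ a > c ∧ c > 0 ∧ θ > b ∧ b ≥ 0 ∧
  (a - c)^2 * θ^2 - a * (θ - b) * ((2*θ + n*a) * (a - c) + a * (n - 1) * (θ - b)) ≥ 0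

theorem stmt_2 (n : ℕ) (hn : 2 ≤ n) (c k z : ℝ) (hc : 0 < c) (hk : 0 < k) (hz : 0 < z) :
    Admissible n ((z+1)*c) (k*c) c ((z+1)*c) ((k+1)*c) ↔
      -(n:ℝ)*z^3 + (k^2 - 3*n)*z^2 - (3*n + 2*k)*z - (n - 1) ≥ 0 := by
  have hc4 : (0:ℝ) < c^4 := by positivity
  have key : ((z+1)*c - c)^2 * ((k+1)*c)^2 - ((z+1)*c) * ((k+1)*c - k*c) *
      ((2*((k+1)*c) + n*((z+1)*c)) * ((z+1)*c - c) + ((z+1)*c) * ((n:ℝ) - 1) * ((k+1)*c - k*c))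
      = c^4 * (-(n:ℝ)*z^3 + (k^2 - 3*n)*z^2 - (3*n + 2*k)*z - (n - 1)) := by ring
  constructor
  · rintro ⟨-, -, -, -, -, h⟩
    rw [key] at h
    exact nonneg_of_mul_nonneg_right h hc4
  · intro h
    refine ⟨le_refl _, by nlinarith, hc, by nlinarith, by positivity, ?_⟩
    rw [key]
    exact mul_nonneg hc4.le h
end

section
/- Let $n \geq 2$ and let $k(n)$ be the unique positive root of $k^3 - \frac{27}{4}nk - \frac{27}{4}n$. For every real $k \geq k(n)$, the quantity $z(k,n) = \frac{k^2 - 3n + \sqrt{k^4 - 6nk^2 - 6nk}}{3n}$ satisfies $z(k,n) \geq 2$. -/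
theorem stmt_14 (n : ℕ) (hn : 2 ≤ n) (kn k : ℝ)
    (hkn : 0 < kn ∧ kn^3 - (27/4)*n*kn - (27/4)*n = 0 ∧
      ∀ x : ℝ, 0 < x → x^3 - (27/4)*n*x - (27/4)*n = 0 → x = kn)
    (hk : kn ≤ k) :
    (k^2 - 3*n + Real.sqrt (k^4 - 6*n*k^2 - 6*n*k)) / (3*n) ≥ 2 := by
  obtain ⟨hpos, heq, -⟩ := hkn
  have hn2 : (2:ℝ) ≤ n := by exact_mod_cast hn
  -- kn ≥ 1
  have hkn1 : 1 ≤ kn := by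
    by_contra h
    push_neg at h
    have h1 : kn^3 < 1 := pow_lt_one₀ hpos.le h (by norm_num)
    nlinarith
  -- 4kn^2 - 2kn ≥ 27n
  have hkey : 27*(n:ℝ) ≤ 4*kn^2 - 2*kn := by nlinarith [mul_pos hpos hpos]
  -- extend to k
  have hkeyk : 27*(n:ℝ) ≤ 4*k^2 - 2*k := by nlinarith
  have hk1 : (1:ℝ) ≤ k := le_trans hkn1 hk
  have hsq : Real.sqrt (k^4 - 6*n*k^2 - 6*n*k) ≥ 9*n - k^2 := by
    rcases le_or_gt (9*(n:ℝ) - k^2) 0 with h | h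
    · exact le_trans h (Real.sqrt_nonneg _)
    · have hnn : (0:ℝ) ≤ 12*k^2 - 6*k - 81*n := by linarith
      have hprod := mul_nonneg (show (0:ℝ) ≤ n by linarith) hnn
      have harg : (0:ℝ) ≤ k^4 - 6*n*k^2 - 6*n*k := by nlinarith [sq_nonneg (9*(n:ℝ) - k^2)]
      rw [ge_iff_le, Real.le_sqrt (by linarith) harg]
      nlinarith [mul_nonneg (show (0:ℝ) ≤ n by linarith) (show (0:ℝ) ≤ 12*k^2 - 6*k - 81*n by linarith)]
  have h3n : (0:ℝ) < 3*n := by linarith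
  rw [ge_iff_le, le_div_iff₀ h3n]
  nlinarith
end

section
/- Let $n \geq 2$ and let $k(n)$ be the unique positive root of $k^3 - \frac{27}{4}nk - \frac{27}{4}n$. The function $k \mapsto z(k,n) = \frac{k^2 - 3n + \sqrt{k^4 - 6nk^2 - 6nk}}{3n}$ is monotone increasing on $[k(n), +\infty)$. -/
theorem stmt_15 (n : ℕ) (hn : 2 ≤ n) (kn : ℝ)
    (hkn : 0 < kn ∧ kn^3 - (27/4)*n*kn - (27/4)*n = 0 ∧
      ∀ x : ℝ, 0 < x → x^3 - (27/4)*n*x - (27/4)*n = 0 → x = kn) :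
    MonotoneOn (fun k : ℝ => (k^2 - 3*n + Real.sqrt (k^4 - 6*n*k^2 - 6*n*k)) / (3*n))
      (Set.Ici kn) := by
  obtain ⟨hpos, heq, -⟩ := hkn
  have hn' : (2:ℝ) ≤ n := by exact_mod_cast hn
  have hk2 : (27/4)*n ≤ kn^2 := by nlinarith
  have hk3 : 3 ≤ kn := by nlinarith
  intro a ha b hb hab
  simp only [Set.mem_Ici] at ha hb
  have h3n : (0:ℝ) < 3*n := by linarith
  have ha3 : (3:ℝ) ≤ a := le_trans hk3 ha
  have hb3 : (3:ℝ) ≤ b := le_trans hk3 hb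
  have ha2 : (27/4)*n ≤ a^2 := le_trans hk2 (by nlinarith)
  have hb2 : (27/4)*n ≤ b^2 := le_trans hk2 (by nlinarith)
  have hsq : a^4 - 6*n*a^2 - 6*n*a ≤ b^4 - 6*n*b^2 - 6*n*b := by
    nlinarith [mul_nonneg (sub_nonneg.2 hab) (sub_nonneg.2 ha2),
      mul_nonneg (sub_nonneg.2 hab) (sub_nonneg.2 hb2),
      mul_nonneg (sub_nonneg.2 hab) (sub_nonneg.2 hab), sq_nonneg (a+b),
      mul_nonneg (mul_nonneg (sub_nonneg.2 hab) (by linarith : (0:ℝ) ≤ a)) (by linarith : (0:ℝ) ≤ b)]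
  have hnum : a^2 - 3*n + Real.sqrt (a^4 - 6*n*a^2 - 6*n*a)
      ≤ b^2 - 3*n + Real.sqrt (b^4 - 6*n*b^2 - 6*n*b) := by
    have := Real.sqrt_le_sqrt hsq
    nlinarith
  exact div_le_div_of_nonneg_right hnum h3n.le
end

section
/- Let $n \geq 2$, $k \geq k(n)$ (where $k(n)$ is the unique positive root of $k^3 - \frac{27}{4}nk - \frac{27}{4}n$), and $z(k,n) = \frac{k^2-3n+\sqrt{k^4-6nk^2-6nk}}{3n}$. Then $H(z(k,n),k) \geq 0$, where $H(z,k) = -nz^3 + (k^2-3n)z^2 - (3n+2k)z - (n-1)$. -/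
theorem stmt_16 (n : ℕ) (hn : 2 ≤ n) (kn k : ℝ)
    (hkn : 0 < kn ∧ kn^3 - (27/4)*n*kn - (27/4)*n = 0 ∧
      ∀ x : ℝ, 0 < x → x^3 - (27/4)*n*x - (27/4)*n = 0 → x = kn)
    (hk : kn ≤ k) :
    let z := (k^2 - 3*n + Real.sqrt (k^4 - 6*n*k^2 - 6*n*k)) / (3*n)
    (-(n:ℝ)*z^3 + (k^2 - 3*n)*z^2 - (3*n + 2*k)*z - (n - 1) ≥ 0) := by
  obtain ⟨hknpos, hkneq, -⟩ := hkn
  intro z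
  have hz : z = (k^2 - 3*n + Real.sqrt (k^4 - 6*n*k^2 - 6*n*k)) / (3*n) := rfl
  have hn2 : (2:ℝ) ≤ (n:ℝ) := by exact_mod_cast hn
  have hnpos : (0:ℝ) < n := by linarith
  have hkpos : (0:ℝ) < k := lt_of_lt_of_le hknpos hk
  -- 4*kn^2 > 27*n
  have hkn2 : 27*(n:ℝ) < 4*kn^2 := by nlinarith [hknpos, hkneq, sq_nonneg kn]
  -- 4*k^3 ≥ 27*n*(k+1)
  have hcube : 27*(n:ℝ)*k + 27*n ≤ 4*k^3 := by
    nlinarith [hk, hkneq, hkn2, mul_pos hkpos hknpos, sq_nonneg (k - kn),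
      mul_nonneg (le_of_lt hkpos) (le_of_lt hknpos)]
  -- discriminant nonneg
  have hDnn : 0 ≤ k^4 - 6*n*k^2 - 6*n*k := by nlinarith [hcube, hkpos, hnpos]
  set s := Real.sqrt (k^4 - 6*n*k^2 - 6*n*k) with hsdef
  have hsnn : 0 ≤ s := Real.sqrt_nonneg _
  have hs : s^2 = k^4 - 6*n*k^2 - 6*n*k := Real.sq_sqrt hDnn
  have h3n : (3*(n:ℝ)) ≠ 0 := by positivity
  have hz3 : 3*(n:ℝ)*z = k^2 - 3*n + s := by
    rw [hz]; field_simp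
  -- key inequality: 2*D*s ≥ R
  have hG : 0 ≤ 4*(k^4 - 6*n*k^2 - 6*n*k)^3 -
      (3*n*(k^2-3*n)*(3*n+2*k) + 27*n^2*((n:ℝ)-1) - 2*(k^4 - 6*n*k^2 - 6*n*k)*(k^2-3*n))^2 := by
    have hfac : 4*(k^4 - 6*n*k^2 - 6*n*k)^3 -
        (3*n*(k^2-3*n)*(3*n+2*k) + 27*n^2*((n:ℝ)-1) - 2*(k^4 - 6*n*k^2 - 6*n*k)*(k^2-3*n))^2
        = 27*n^3*(k+1)^3*(4*k^3 - 27*n*k - 27*n) := by ring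
    rw [hfac]
    have h1 : (0:ℝ) ≤ 27*(n:ℝ)^3*(k+1)^3 := by positivity
    have h2 : (0:ℝ) ≤ 4*k^3 - 27*n*k - 27*n := by linarith [hcube]
    exact mul_nonneg h1 h2
  have hkey : 3*n*(k^2-3*n)*(3*n+2*k) + 27*n^2*((n:ℝ)-1) - 2*(k^4 - 6*n*k^2 - 6*n*k)*(k^2-3*n)
      ≤ 2*(k^4 - 6*n*k^2 - 6*n*k)*s := by
    set D := k^4 - 6*n*k^2 - 6*n*k with hDdef
    set R := 3*n*(k^2-3*n)*(3*n+2*k) + 27*n^2*((n:ℝ)-1) - 2*D*(k^2-3*n) with hRdef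
    rcases le_or_gt R 0 with h | h
    · have : 0 ≤ 2*D*s := by positivity
      linarith
    · have h1 : (2*D*s)^2 = 4*D^3 := by linear_combination 4*D^2*hs
      have h2 : R^2 ≤ (2*D*s)^2 := by rw [h1]; linarith [hG]
      have h3 : 0 ≤ 2*D*s := by positivity
      nlinarith [h2, h3, h]
  -- main identity: 27*n^3*H = n*(2*D*s - R)
  have hid : 27*(n:ℝ)^3*(-(n:ℝ)*z^3 + (k^2 - 3*n)*z^2 - (3*n + 2*k)*z - (n - 1))
      = n*(2*(k^4 - 6*n*k^2 - 6*n*k)*s -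
        (3*n*(k^2-3*n)*(3*n+2*k) + 27*n^2*((n:ℝ)-1) - 2*(k^4 - 6*n*k^2 - 6*n*k)*(k^2-3*n))) := by
    linear_combination (-(n:ℝ)*((3*n*z)^2 + (3*n*z)*(k^2-3*n+s) + (k^2-3*n+s)^2)
        + 3*n*(k^2-3*n)*((3*n*z) + (k^2-3*n+s)) - 9*n^2*(3*n+2*k)) * hz3
      + (-(n:ℝ)*s) * hs
  have hpos : (0:ℝ) < 27*(n:ℝ)^3 := by positivity
  have hHnn : 0 ≤ 27*(n:ℝ)^3*(-(n:ℝ)*z^3 + (k^2 - 3*n)*z^2 - (3*n + 2*k)*z - (n - 1)) := by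
    rw [hid]
    have : 0 ≤ 2*(k^4 - 6*n*k^2 - 6*n*k)*s -
        (3*n*(k^2-3*n)*(3*n+2*k) + 27*n^2*((n:ℝ)-1) - 2*(k^4 - 6*n*k^2 - 6*n*k)*(k^2-3*n)) := by
      linarith [hkey]
    exact mul_nonneg hnpos.le this
  exact le_of_mul_le_mul_left (by linarith [hHnn]) hpos
end

section
/- Let $n \geq 2$, and let $k(n)$ be the unique positive root of $k^3 - \frac{27}{4}nk - \frac{27}{4}n$. If $k > \frac{3n + \sqrt{9n^2+12n}}{2}$, then $k \geq k(n)$ and $k < z(k,n)$, where $z(k,n) = \frac{k^2-3n+\sqrt{k^4-6nk^2-6nk}}{3n}$; i.e., for such $k$ the admissible quintuple $(z(k,n)+1, k, 1, z(k,n)+1, k+1)$ satisfies $b - a + c < 0$. -/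
set_option maxHeartbeats 1000000

theorem stmt_19 (n : ℕ) (hn : 2 ≤ n) (kn k : ℝ)
    (hkn : 0 < kn ∧ kn^3 - (27/4)*n*kn - (27/4)*n = 0 ∧
      ∀ x : ℝ, 0 < x → x^3 - (27/4)*n*x - (27/4)*n = 0 → x = kn)
    (hk : (3*n + Real.sqrt (9*n^2 + 12*n)) / 2 < k) :
    let z := (k^2 - 3*n + Real.sqrt (k^4 - 6*n*k^2 - 6*n*k)) / (3*n)
    kn ≤ k ∧ k < z ∧ Admissible n (z+1) k 1 (z+1) (k+1) ∧ k - (z+1) + 1 < 0 := by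
  intro z
  obtain ⟨hkn0, hknroot, hknuniq⟩ := hkn
  have hn' : (2:ℝ) ≤ (n:ℝ) := by exact_mod_cast hn
  have hN0 : (0:ℝ) < (n:ℝ) := by linarith
  set N : ℝ := (n:ℝ) with hNdef
  have hs0nn : 0 ≤ Real.sqrt (9*N^2 + 12*N) := Real.sqrt_nonneg _
  have hs0sq : (Real.sqrt (9*N^2 + 12*N))^2 = 9*N^2 + 12*N := by
    rw [Real.sq_sqrt]; nlinarith
  have hs0gt : 3*N < Real.sqrt (9*N^2 + 12*N) := by
    nlinarith [hs0sq, hs0nn]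
  have hk3N : 3*N < k := by nlinarith [hk]
  have hk0 : 0 < k := by nlinarith
  have hkey : 3*N*k + 3*N < k^2 := by
    have h1 : Real.sqrt (9*N^2 + 12*N) < 2*k - 3*N := by linarith [hk]
    nlinarith [hs0sq, hs0nn]
  have hcube : 3*N*k^2 + 3*N*k < k^3 := by
    have := mul_lt_mul_of_pos_left hkey hk0
    nlinarith [this]
  have hD : 0 < k^4 - 6*N*k^2 - 6*N*k := by
    have h4 := mul_lt_mul_of_pos_left hcube hk0
    have h5 := mul_lt_mul_of_pos_left hcube (by linarith : (0:ℝ) < 3*N)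
    have h6 : 0 ≤ 9*N*(N-2)*k^2 := by
      apply mul_nonneg (mul_nonneg (by positivity) (by linarith)) (sq_nonneg k)
    have h7 : 0 ≤ 9*N*(N-2)*k :=
      mul_nonneg (mul_nonneg (by positivity) (by linarith)) (le_of_lt hk0)
    have h8 : 0 < N*k^2 := by positivity
    have h9 : 0 < N*k := by positivity
    nlinarith [h4, h5, h6, h7, h8, h9]
  set s : ℝ := Real.sqrt (k^4 - 6*N*k^2 - 6*N*k) with hsdef
  have hsnn : 0 ≤ s := Real.sqrt_nonneg _
  have hssq : s^2 = k^4 - 6*N*k^2 - 6*N*k := Real.sq_sqrt (le_of_lt hD)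
  -- kn ≤ k
  have hPk : 0 < k^3 - (27/4)*N*k - (27/4)*N := by
    nlinarith [hcube, mul_lt_mul_of_pos_left hkey (by linarith : (0:ℝ) < 3*N), hkey, hk3N, hk0, hn']
  have hknk : kn ≤ k := by
    by_contra hc
    push_neg at hc
    have hcont : ContinuousOn (fun x : ℝ => x^3 - (27/4)*N*x - (27/4)*N) (Set.Icc 0 k) := by
      apply Continuous.continuousOn; fun_prop
    have hsub := intermediate_value_Ioo (le_of_lt hk0) hcont
    have h0mem : (0:ℝ) ∈ Set.Ioo ((0:ℝ)^3 - (27/4)*N*0 - (27/4)*N) (k^3 - (27/4)*N*k - (27/4)*N) := by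
      constructor
      · nlinarith
      · exact hPk
    obtain ⟨x, hx, hfx⟩ := hsub h0mem
    have hxkn := hknuniq x hx.1 hfx
    rw [hxkn] at hx
    linarith [hx.2]
  have hzdef : 3*N*z = k^2 - 3*N + s := by
    show 3*N*((k^2 - 3*N + s)/(3*N)) = _
    field_simp
  clear_value z
  have h3N : (0:ℝ) < 3*N := by linarith
  have hzk : k < z := by
    have h1 : 3*N*k < 3*N*z := by rw [hzdef]; nlinarith [hsnn, hkey]
    exact lt_of_mul_lt_mul_left (by linarith) (le_of_lt h3N)
  have hz0 : 0 < z := lt_trans hk0 hzk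
  have hz2 : 3*N*z^2 = 2*(k^2-3*N)*z - (3*N + 2*k) := by
    apply mul_left_cancel₀ (ne_of_gt h3N)
    linear_combination (3*N*z - (k^2-3*N) + s) * hzdef + hssq
  have hz3 : 3*N*z^3 = 2*(k^2-3*N)*z^2 - (3*N + 2*k)*z := by
    linear_combination z * hz2
  refine ⟨hknk, hzk, ⟨le_refl _, by linarith, one_pos, by linarith, le_of_lt hk0, ?_⟩, by linarith⟩
  have hE : 9*N*((z+1 - 1)^2 * (k+1)^2 - (z+1) * ((k+1) - k) * ((2*(k+1) + N*(z+1)) * ((z+1) - 1) + (z+1) * (N - 1) * ((k+1) - k)))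
      = 2*(k^4 - 6*N*k^2 - 6*N*k)*z - (2*k^3 + 3*N*k^2 - 6*N*k - 9*N) := by
    linear_combination (-3*N)*hz3 + (k^2 - 3*N)*hz2
  have hpos : 0 ≤ 2*(k^4 - 6*N*k^2 - 6*N*k)*z - (2*k^3 + 3*N*k^2 - 6*N*k - 9*N) := by
    have h1 : 2*(k^4 - 6*N*k^2 - 6*N*k)*k < 2*(k^4 - 6*N*k^2 - 6*N*k)*z := by
      apply mul_lt_mul_of_pos_left hzk; linarith
    nlinarith [h1, hD, hcube, hkey, hk3N, hk0, hn',
      mul_lt_mul_of_pos_left hcube (mul_pos hk0 hk0),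
      mul_lt_mul_of_pos_left hkey (mul_pos hk0 hk0)]
  nlinarith [hE, hpos, hN0]
end
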